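/- arXiv:2105.04862 — 7 statements merged into one kernel-verified Lean document; each statement's English description precedes it below -/
import Mathlib

section
/- Let (X, ‖·|) be an asymmetric normed space whose index of symmetry is zero, i.e. for every ε > 0 there exists x ∈ X with ‖x| = 1 and ‖-x| < ε. Then X, equipped with the topology induced by the asymmetric norm, is not a Baire space. -/
/-- Auxiliary: in the topology generated by the asymmetric balls, every open
set containing a point contains a ball around that point. -/
lemma aux_ball_mem {X : Type*} [AddCommGroup X] (p : X → ℝ)
    (hpt : ∀ x y, p (x + y) ≤ p x + p y)
    {U : Set X}
    (hU : TopologicalSpace.GenerateOpen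
        {s : Set X | ∃ x : X, ∃ r : ℝ, 0 < r ∧ s = {y : X | p (y - x) < r}} U) :
    ∀ x ∈ U, ∃ r : ℝ, 0 < r ∧ {y : X | p (y - x) < r} ⊆ U := by
  induction hU with
  | basic s hs =>
    obtain ⟨c, s', hs', rfl⟩ := hs
    intro x hx
    simp only [Set.mem_setOf_eq] at hx
    refine ⟨s' - p (x - c), by linarith, ?_⟩
    intro y hy
    simp only [Set.mem_setOf_eq] at hy ⊢
    have h := hpt (y - x) (x - c)
    rw [sub_add_sub_cancel] at h
    linarith
  | univ => exact fun x _ => ⟨1, one_pos, fun _ _ => trivial⟩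
  | inter s t _ _ ihs iht =>
    intro x hx
    obtain ⟨r1, hr1, h1⟩ := ihs x hx.1
    obtain ⟨r2, hr2, h2⟩ := iht x hx.2
    refine ⟨min r1 r2, lt_min hr1 hr2, fun y hy => ?_⟩
    have hy' : p (y - x) < min r1 r2 := hy
    exact ⟨h1 (show p (y - x) < r1 from lt_of_lt_of_le hy' (min_le_left _ _)),
      h2 (show p (y - x) < r2 from lt_of_lt_of_le hy' (min_le_right _ _))⟩
  | sUnion S _ ih =>
    intro x hx
    obtain ⟨s, hs, hxs⟩ := hx
    obtain ⟨r, hr, h⟩ := ih s hs x hxs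
    exact ⟨r, hr, h.trans (Set.subset_sUnion_of_mem hs)⟩

/-- An asymmetric normed space whose index of symmetry is zero
(for every `ε > 0` there is `x` with `‖x| = 1` and `‖-x| < ε`), equipped with
the topology induced by the asymmetric norm, is not a Baire space. -/
theorem stmt_4 {X : Type*} [AddCommGroup X] [Module ℝ X] (p : X → ℝ)
    (hp0 : ∀ x, 0 ≤ p x)
    (hph : ∀ c : ℝ, 0 ≤ c → ∀ x, p (c • x) = c * p x)
    (hpt : ∀ x y, p (x + y) ≤ p x + p y)
    (hps : ∀ x, (p x = 0 ∧ p (-x) = 0) ↔ x = 0)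
    (hsym : ∀ ε : ℝ, 0 < ε → ∃ x : X, p x = 1 ∧ p (-x) < ε) :
    ¬ @BaireSpace X (TopologicalSpace.generateFrom
        {s : Set X | ∃ x : X, ∃ r : ℝ, 0 < r ∧ s = {y : X | p (y - x) < r}}) := by
  intro hB
  letI T : TopologicalSpace X := TopologicalSpace.generateFrom
      {s : Set X | ∃ x : X, ∃ r : ℝ, 0 < r ∧ s = {y : X | p (y - x) < r}}
  haveI : BaireSpace X := hB
  have hp0' : p (0 : X) = 0 := by
    have := hph 0 le_rfl (0 : X)
    simpa using this
  -- each G n is open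
  have hGopen : ∀ n : ℕ, IsOpen {x : X | (n : ℝ) < p (-x)} := by
    intro n
    rw [isOpen_iff_forall_mem_open]
    intro x hx
    simp only [Set.mem_setOf_eq] at hx
    refine ⟨{y : X | p (y - x) < p (-x) - n}, ?_, ?_, ?_⟩
    · intro y hy
      simp only [Set.mem_setOf_eq] at hy ⊢
      have h := hpt (-y) (y - x)
      have he : -y + (y - x) = -x := by abel
      rw [he] at h
      linarith
    · exact TopologicalSpace.GenerateOpen.basic _ ⟨x, p (-x) - n, by linarith, rfl⟩
    · simp [hp0']; linarith
  -- each G n is dense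
  have hGdense : ∀ n : ℕ, Dense {x : X | (n : ℝ) < p (-x)} := by
    intro n
    rw [dense_iff_inter_open]
    intro U hU ⟨x, hx⟩
    obtain ⟨r, hr, hball⟩ := aux_ball_mem p hpt hU x hx
    set t : ℝ := (n : ℝ) + p x + 1 with ht_def
    have ht : 0 < t := by have := hp0 x; have : (0:ℝ) ≤ (n:ℝ) := Nat.cast_nonneg n; linarith [hp0 x]
    obtain ⟨u, hu1, hu2⟩ := hsym (r / t) (div_pos hr ht)
    refine ⟨x - t • u, hball ?_, ?_⟩
    · simp only [Set.mem_setOf_eq, sub_sub_cancel_left]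
      have : p (-(t • u)) = t * p (-u) := by
        rw [← smul_neg]; exact hph t ht.le (-u)
      rw [this]
      calc t * p (-u) < t * (r / t) := by
            exact mul_lt_mul_of_pos_left hu2 ht
        _ = r := mul_div_cancel₀ r ht.ne'
    · simp only [Set.mem_setOf_eq, neg_sub]
      have h1 : p (t • u) = t := by rw [hph t ht.le u, hu1, mul_one]
      have h2 := hpt (t • u - x) x
      rw [sub_add_cancel] at h2
      rw [h1] at h2
      linarith
  -- intersection is dense, hence nonempty, contradiction
  have hdense : Dense (⋂ n : ℕ, {x : X | (n : ℝ) < p (-x)}) :=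
    dense_iInter_of_isOpen hGopen hGdense
  obtain ⟨x₀, -, -⟩ := hsym 1 one_pos
  haveI : Nonempty X := ⟨x₀⟩
  obtain ⟨z, hz⟩ := hdense.nonempty
  obtain ⟨m, hm⟩ := exists_nat_ge (p (-z))
  have := Set.mem_iInter.1 hz m
  simp only [Set.mem_setOf_eq] at this
  linarith
end

section
/- Let (X, ‖·|) be a biBanach asymmetric normed space. Then X, equipped with the topology induced by the asymmetric norm, is a Baire space if and only if the asymmetric norm is equivalent to the associated norm, i.e. there exists a constant c > 0 such that c·‖x‖_s ≤ ‖x| ≤ ‖x‖_s for all x ∈ X (equivalently, (X,‖·|) is isomorphic to its associated normed space). -/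
open TopologicalSpace Set

theorem stmt6_aux {X : Type*} [AddCommGroup X] [Module ℝ X] [t : TopologicalSpace X]
    (hB : BaireSpace X) (p : X → ℝ)
    (hp0 : ∀ x, 0 ≤ p x)
    (hph : ∀ c : ℝ, 0 ≤ c → ∀ x, p (c • x) = c * p x)
    (hpt : ∀ x y, p (x + y) ≤ p x + p y)
    (ht : t = TopologicalSpace.generateFrom
      {s : Set X | ∃ x : X, ∃ r : ℝ, 0 < r ∧ s = {y : X | p (y - x) < r}}) :
    ∃ K : ℝ, 1 ≤ K ∧ ∀ z, p (-z) ≤ K * p z := by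
  have hp00 : p 0 = 0 := by
    have := hph 0 le_rfl 0; simpa using this
  set S : Set (Set X) := {s : Set X | ∃ x : X, ∃ r : ℝ, 0 < r ∧ s = {y : X | p (y - x) < r}}
    with hS
  have hbasis : IsTopologicalBasis S := by
    refine ⟨?_, ?_, ht⟩
    · rintro t₁ ⟨x₁, r₁, hr₁, rfl⟩ t₂ ⟨x₂, r₂, hr₂, rfl⟩ y ⟨hy₁, hy₂⟩
      simp only [mem_setOf_eq] at hy₁ hy₂
      refine ⟨{z : X | p (z - y) < min (r₁ - p (y - x₁)) (r₂ - p (y - x₂))},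
        ⟨y, _, by simp [hy₁, hy₂], rfl⟩, by simp [hp00, hy₁, hy₂], ?_⟩
      intro z hz
      simp only [mem_setOf_eq, lt_min_iff] at hz
      constructor
      · have := hpt (z - y) (y - x₁)
        simp only [sub_add_sub_cancel] at this
        simp only [mem_setOf_eq]; linarith [hz.1]
      · have := hpt (z - y) (y - x₂)
        simp only [sub_add_sub_cancel] at this
        simp only [mem_setOf_eq]; linarith [hz.2]
    · refine eq_univ_of_forall fun x => ?_
      exact ⟨{y : X | p (y - x) < 1}, ⟨x, 1, one_pos, rfl⟩, by simp [hp00]⟩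
  set F : ℕ → Set X := fun n => {x : X | p (-x) ≤ n} with hF
  have hFc : ∀ n, IsClosed (F n) := by
    intro n
    rw [← isOpen_compl_iff, hbasis.isOpen_iff]
    intro a ha
    simp only [hF, mem_compl_iff, mem_setOf_eq, not_le] at ha
    refine ⟨{y : X | p (y - a) < p (-a) - n}, ⟨a, _, by linarith, rfl⟩,
      by simp [hp00]; linarith, ?_⟩
    intro y hy
    simp only [mem_setOf_eq] at hy
    have h1 : p (-a) ≤ p (-y) + p (y - a) := by
      have := hpt (-y) (y - a)
      have e : -y + (y - a) = -a := by abel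
      rwa [e] at this
    simp only [hF, mem_compl_iff, mem_setOf_eq, not_le]
    linarith
  have hFU : (⋃ n, F n) = univ := by
    refine eq_univ_of_forall fun x => mem_iUnion.2 ?_
    obtain ⟨n, hn⟩ := exists_nat_ge (p (-x))
    exact ⟨n, hn⟩
  have : Nonempty X := ⟨0⟩
  obtain ⟨n, x₀, hx₀⟩ := nonempty_interior_of_iUnion_of_closed hFc hFU
  obtain ⟨v, ⟨c, r, hr, rfl⟩, hx₀v, hvF⟩ :=
    hbasis.isOpen_iff.1 isOpen_interior x₀ hx₀
  simp only [mem_setOf_eq] at hx₀v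
  set r' : ℝ := r - p (x₀ - c) with hr'
  have hr'pos : 0 < r' := by simp [hr']; linarith
  set M : ℝ := n + p x₀ with hM
  have hM0 : 0 ≤ M := by
    have := hp0 x₀; have : (0:ℝ) ≤ n := Nat.cast_nonneg n; simp [hM]; linarith [hp0 x₀]
  have key : ∀ z, p z < r' → p (-z) ≤ M := by
    intro z hz
    have h1 : p (x₀ + z - c) < r := by
      have h := hpt (x₀ - c) z
      have e : x₀ - c + z = x₀ + z - c := by abel
      rw [e] at h
      simp only [hr'] at hz; linarith
    have h2 : (x₀ + z) ∈ F n := interior_subset (hvF h1)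
    simp only [hF, mem_setOf_eq] at h2
    have h3 : p (-z) ≤ p (-(x₀ + z)) + p x₀ := by
      have := hpt (-(x₀ + z)) x₀
      have e : -(x₀ + z) + x₀ = -z := by abel
      rwa [e] at this
    simp only [hM]; linarith
  refine ⟨max 1 (2 * M / r'), le_max_left _ _, fun z => ?_⟩
  rcases eq_or_lt_of_le (hp0 z) with h | h
  · have hz0 : p (-z) ≤ 0 := by
      by_contra h'
      push_neg at h'
      set t0 : ℝ := (M + 1) / p (-z) with ht0
      have ht0pos : 0 < t0 := by positivity
      have h1 : p (t0 • z) < r' := by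
        rw [hph t0 ht0pos.le, ← h]; simpa using hr'pos
      have h2 := key _ h1
      rw [← smul_neg, hph t0 ht0pos.le, ht0, div_mul_cancel₀] at h2
      · linarith
      · exact ne_of_gt h'
    have : p (-z) = 0 := le_antisymm hz0 (hp0 _)
    rw [this, ← h]; simp
  · set t0 : ℝ := r' / (2 * p z) with ht0
    have ht0pos : 0 < t0 := by positivity
    have h1 : p (t0 • z) < r' := by
      rw [hph t0 ht0pos.le]
      have e : t0 * p z = r' / 2 := by rw [ht0]; field_simp
      rw [e]; linarith
    have h2 := key _ h1
    rw [← smul_neg, hph t0 ht0pos.le] at h2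
    have h3 : p (-z) ≤ (2 * M / r') * p z := by
      rw [ht0, div_mul_eq_mul_div, div_le_iff₀ (by positivity)] at h2
      rw [div_mul_eq_mul_div, le_div_iff₀ hr'pos]
      nlinarith
    calc p (-z) ≤ (2 * M / r') * p z := h3
      _ ≤ max 1 (2 * M / r') * p z := by
          apply mul_le_mul_of_nonneg_right (le_max_right _ _) (hp0 z)

/-- Let `(X, ‖·|)` be a biBanach asymmetric normed space, encoded as a
real Banach space `X` whose norm is the associated norm: `max (p x) (p (-x)) = ‖x‖`.
Then `X` with the topology induced by the asymmetric norm is a Baire space if and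
only if the asymmetric norm is equivalent to the associated norm, i.e. there is a
constant `c > 0` with `c * ‖x‖ ≤ p x ≤ ‖x‖` for all `x`. -/
theorem stmt_6 {X : Type*} [NormedAddCommGroup X] [NormedSpace ℝ X] [CompleteSpace X]
    (p : X → ℝ)
    (hp0 : ∀ x, 0 ≤ p x)
    (hph : ∀ c : ℝ, 0 ≤ c → ∀ x, p (c • x) = c * p x)
    (hpt : ∀ x y, p (x + y) ≤ p x + p y)
    (hps : ∀ x, (p x = 0 ∧ p (-x) = 0) ↔ x = 0)
    (hs : ∀ x : X, max (p x) (p (-x)) = ‖x‖) :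
    @BaireSpace X (TopologicalSpace.generateFrom
        {s : Set X | ∃ x : X, ∃ r : ℝ, 0 < r ∧ s = {y : X | p (y - x) < r}})
      ↔ ∃ c : ℝ, 0 < c ∧ ∀ x : X, c * ‖x‖ ≤ p x ∧ p x ≤ ‖x‖ := by
  have hp00 : p 0 = 0 := by have := hph 0 le_rfl 0; simpa using this
  have hple : ∀ z : X, p z ≤ ‖z‖ := fun z => (hs z) ▸ le_max_left _ _
  constructor
  · intro hB
    obtain ⟨K, hK1, hKz⟩ := stmt6_aux (t := TopologicalSpace.generateFrom
      {s : Set X | ∃ x : X, ∃ r : ℝ, 0 < r ∧ s = {y : X | p (y - x) < r}})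
      hB p hp0 hph hpt rfl
    have hKpos : 0 < K := lt_of_lt_of_le one_pos hK1
    refine ⟨1 / K, by positivity, fun x => ⟨?_, hple x⟩⟩
    have hnorm : ‖x‖ ≤ K * p x := by
      rw [← hs x]
      refine max_le ?_ (hKz x)
      nlinarith [hp0 x]
    rw [div_mul_eq_mul_div, div_le_iff₀ hKpos]
    linarith
  · rintro ⟨c, hc, hx⟩
    have hle1 : (inferInstance : TopologicalSpace X) ≤ TopologicalSpace.generateFrom
        {s : Set X | ∃ x : X, ∃ r : ℝ, 0 < r ∧ s = {y : X | p (y - x) < r}} := by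
      refine le_generateFrom ?_
      rintro s ⟨x, r, hr, rfl⟩
      rw [Metric.isOpen_iff]
      intro y hy
      simp only [Set.mem_setOf_eq] at hy
      refine ⟨r - p (y - x), by linarith, fun y' hy' => ?_⟩
      rw [Metric.mem_ball, dist_eq_norm] at hy'
      have h1 : p (y' - x) ≤ p (y' - y) + p (y - x) := by
        have := hpt (y' - y) (y - x)
        rwa [sub_add_sub_cancel] at this
      have h2 : p (y' - y) ≤ ‖y' - y‖ := hple _
      simp only [Set.mem_setOf_eq]
      linarith
    have hle2 : TopologicalSpace.generateFrom
        {s : Set X | ∃ x : X, ∃ r : ℝ, 0 < r ∧ s = {y : X | p (y - x) < r}}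
        ≤ (inferInstance : TopologicalSpace X) := by
      rw [TopologicalSpace.le_def]
      intro U hU
      have hUeq : U = ⋃₀ {v | (∃ x : X, ∃ r : ℝ, 0 < r ∧ v = {y : X | p (y - x) < r})
          ∧ v ⊆ U} := by
        ext y
        constructor
        · intro hy
          obtain ⟨ε, hε, hball⟩ := Metric.isOpen_iff.1 hU y hy
          refine ⟨{z : X | p (z - y) < c * ε}, ⟨⟨y, c * ε, by positivity, rfl⟩, ?_⟩,
            by simp [hp00]; positivity⟩
          intro z hz
          simp only [Set.mem_setOf_eq] at hz
          apply hball
          rw [Metric.mem_ball, dist_eq_norm]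
          have h1 := (hx (z - y)).1
          have h2 : c * ‖z - y‖ < c * ε := lt_of_le_of_lt h1 hz
          exact lt_of_mul_lt_mul_left h2 hc.le
        · rintro ⟨v, ⟨_, hvU⟩, hyv⟩
          exact hvU hyv
      rw [hUeq]
      exact TopologicalSpace.GenerateOpen.sUnion _ fun v hv =>
        TopologicalSpace.GenerateOpen.basic v hv.1
    have heq : TopologicalSpace.generateFrom
        {s : Set X | ∃ x : X, ∃ r : ℝ, 0 < r ∧ s = {y : X | p (y - x) < r}}
        = (inferInstance : TopologicalSpace X) := le_antisymm hle2 hle1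
    rw [heq]
    infer_instance
end

section
/- Let (X, ‖·|) be an asymmetric normed space and suppose there exists a linear functional p : X → ℝ such that p is bounded for the asymmetric norm (there exists C ≥ 0 with p(x) ≤ C‖x| for all x ∈ X) while -p is not bounded (for every C ≥ 0 there exists x ∈ X with -p(x) > C‖x|). Then X, equipped with the topology induced by the asymmetric norm, is not a Baire space. -/
/-- Let `(X, ‖·|)` be an asymmetric normed space admitting a linear
functional `f` that is bounded for the asymmetric norm while `-f` is not bounded.
Then `X` with the topology induced by the asymmetric norm is not a Baire space. -/
theorem stmt_7 {X : Type*} [AddCommGroup X] [Module ℝ X] (p : X → ℝ)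
    (hp0 : ∀ x, 0 ≤ p x)
    (hph : ∀ c : ℝ, 0 ≤ c → ∀ x, p (c • x) = c * p x)
    (hpt : ∀ x y, p (x + y) ≤ p x + p y)
    (hps : ∀ x, (p x = 0 ∧ p (-x) = 0) ↔ x = 0)
    (f : X →ₗ[ℝ] ℝ)
    (hfb : ∃ C : ℝ, 0 ≤ C ∧ ∀ x, f x ≤ C * p x)
    (hfnb : ∀ C : ℝ, 0 ≤ C → ∃ x, C * p x < -f x) :
    ¬ @BaireSpace X (TopologicalSpace.generateFrom
        {s : Set X | ∃ x : X, ∃ r : ℝ, 0 < r ∧ s = {y : X | p (y - x) < r}}) := by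
  set S : Set (Set X) :=
    {s : Set X | ∃ x : X, ∃ r : ℝ, 0 < r ∧ s = {y : X | p (y - x) < r}} with hS
  letI τ : TopologicalSpace X := TopologicalSpace.generateFrom S
  intro hB
  haveI : @BaireSpace X τ := hB
  obtain ⟨C, hC0, hCb⟩ := hfb
  have hp00 : p 0 = 0 := by
    have := hph 0 le_rfl 0
    simpa using this
  -- the balls form a topological basis
  have hbasis : @TopologicalSpace.IsTopologicalBasis X τ S := by
    refine ⟨?_, ?_, rfl⟩
    · rintro t₁ ⟨x₁, r₁, hr₁, rfl⟩ t₂ ⟨x₂, r₂, hr₂, rfl⟩ x ⟨hx₁, hx₂⟩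
      refine ⟨{y : X | p (y - x) < min (r₁ - p (x - x₁)) (r₂ - p (x - x₂))},
        ⟨x, _, by simp [sub_pos]; exact ⟨hx₁, hx₂⟩, rfl⟩, by simp [hp00, sub_pos]; exact ⟨hx₁, hx₂⟩, ?_⟩
      intro y hy
      simp only [Set.mem_setOf_eq, lt_min_iff] at hy
      constructor
      · have := hpt (y - x) (x - x₁)
        simp only [sub_add_sub_cancel] at this
        simp only [Set.mem_setOf_eq]
        linarith [hy.1]
      · have := hpt (y - x) (x - x₂)
        simp only [sub_add_sub_cancel] at this
        simp only [Set.mem_setOf_eq]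
        linarith [hy.2]
    · ext x
      simp only [Set.mem_sUnion, Set.mem_univ, iff_true]
      exact ⟨{y : X | p (y - x) < 1}, ⟨x, 1, one_pos, rfl⟩, by simp [hp00]⟩
  -- the open dense sets
  set U : ℕ → Set X := fun n => {x : X | f x < -(n : ℝ)} with hU
  have hUopen : ∀ n, @IsOpen X τ (U n) := by
    intro n
    rw [hbasis.isOpen_iff]
    intro a ha
    simp only [hU, Set.mem_setOf_eq] at ha
    refine ⟨{y : X | p (y - a) < (-(n : ℝ) - f a) / (C + 1)},
      ⟨a, _, div_pos (by linarith) (by linarith), rfl⟩,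
      by simp [hp00]; exact div_pos (by linarith) (by linarith), ?_⟩
    intro y hy
    simp only [hU, Set.mem_setOf_eq] at hy ⊢
    have h1 : f y - f a = f (y - a) := by rw [map_sub]
    have h2 : f (y - a) ≤ C * p (y - a) := hCb _
    have h3 : C * p (y - a) ≤ (C + 1) * p (y - a) := by nlinarith [hp0 (y - a)]
    have h4 : (C + 1) * p (y - a) < (C + 1) * ((-(n : ℝ) - f a) / (C + 1)) := by
      apply mul_lt_mul_of_pos_left hy; linarith
    rw [mul_div_cancel₀ _ (by linarith : (C : ℝ) + 1 ≠ 0)] at h4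
    linarith
  have hUdense : ∀ n, @Dense X τ (U n) := by
    intro n
    rw [hbasis.dense_iff]
    rintro o ⟨x₀, r, hr, rfl⟩ -
    by_cases hx₀ : f x₀ < -(n : ℝ)
    · exact ⟨x₀, by simp [hp00, hr], hx₀⟩
    push_neg at hx₀
    set D : ℝ := max 0 ((f x₀ + (n : ℝ) + 1) * 2 / r) with hD
    obtain ⟨z, hz⟩ := hfnb D (le_max_left _ _)
    have hpz := hp0 z
    rcases eq_or_lt_of_le hpz with hpz0 | hpz0
    · -- p z = 0, f z < 0
      have hfz : f z < 0 := by
        have : D * p z = 0 := by rw [← hpz0]; ring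
        linarith
      set t : ℝ := (f x₀ + (n : ℝ) + 1) / (-f z) with ht
      have ht0 : 0 < t := div_pos (by linarith) (by linarith)
      refine ⟨x₀ + t • z, ?_, ?_⟩
      · simp only [Set.mem_setOf_eq, add_sub_cancel_left]
        rw [hph t ht0.le, ← hpz0]
        simpa using hr
      · simp only [hU, Set.mem_setOf_eq, map_add, map_smul, smul_eq_mul]
        have hfz' : -f z ≠ 0 := by linarith
        have : t * f z = -(f x₀ + (n : ℝ) + 1) := by
          rw [ht]; rw [div_mul_eq_mul_div, div_eq_iff hfz']; ring
        rw [this]; push_cast; linarith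
    · -- p z > 0
      set t : ℝ := r / (2 * p z) with ht
      have ht0 : 0 < t := div_pos hr (by linarith)
      have hDr : f x₀ + (n : ℝ) + 1 ≤ D * r / 2 := by
        have : (f x₀ + (n : ℝ) + 1) * 2 / r ≤ D := le_max_right _ _
        calc f x₀ + (n : ℝ) + 1 = ((f x₀ + (n : ℝ) + 1) * 2 / r) * r / 2 := by
              field_simp
          _ ≤ D * r / 2 := by
              have := mul_le_mul_of_nonneg_right this hr.le
              linarith
      refine ⟨x₀ + t • z, ?_, ?_⟩
      · simp only [Set.mem_setOf_eq, add_sub_cancel_left]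
        rw [hph t ht0.le, ht]
        rw [div_mul_eq_mul_div, div_lt_iff₀ (by linarith)]
        nlinarith
      · simp only [hU, Set.mem_setOf_eq, map_add, map_smul, smul_eq_mul]
        have h1 : f z < -(D * p z) := by linarith
        have h2 : t * f z < t * (-(D * p z)) := by
          exact mul_lt_mul_of_pos_left h1 ht0
        have h3 : t * (D * p z) = D * r / 2 := by
          rw [ht]; field_simp
        have : t * f z < -(D * r / 2) := by rw [← h3]; linarith
        linarith
  have hdense : @Dense X τ (⋂ n, U n) := dense_iInter_of_isOpen hUopen hUdense
  haveI : Nonempty X := ⟨0⟩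
  obtain ⟨x, hx⟩ := hdense.nonempty
  simp only [Set.mem_iInter, hU, Set.mem_setOf_eq] at hx
  obtain ⟨n, hn⟩ := exists_nat_gt (-f x)
  have := hx n
  linarith
end

section
/- Let (X, d) be a quasi-hemi-metric space with index of symmetry c(X) > 0 such that the symmetrized metric space (X, d_s) is complete. Then the topology on X induced by d (generated by the balls B(x,r) = { y : d(x,y) < r }) coincides with the topology of the metric d_s, and in particular X with this topology is a Baire space. -/
private lemma gen_char' {X : Type*} (ρ : X → X → ℝ)
    (hρ0 : ∀ x, ρ x x = 0)
    (htri : ∀ x y z, ρ x y ≤ ρ x z + ρ z y) (U : Set X) :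
    (TopologicalSpace.generateFrom
        {s : Set X | ∃ x : X, ∃ r : ℝ, 0 < r ∧ s = {y : X | ρ x y < r}}).IsOpen U ↔
      ∀ y ∈ U, ∃ r > 0, {z : X | ρ y z < r} ⊆ U := by
  constructor
  · intro h
    induction h with
    | basic s hs =>
      rintro y hy
      obtain ⟨x, r, hr, rfl⟩ := hs
      simp only [Set.mem_setOf_eq] at hy
      refine ⟨r - ρ x y, by linarith, fun z hz => ?_⟩
      simp only [Set.mem_setOf_eq] at hz ⊢
      have h2 := htri x z y
      linarith
    | univ => exact fun y _ => ⟨1, one_pos, fun z _ => trivial⟩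
    | inter s t hs ht ihs iht =>
      intro y hy
      obtain ⟨r1, hr1, h1⟩ := ihs y hy.1
      obtain ⟨r2, hr2, h2⟩ := iht y hy.2
      refine ⟨min r1 r2, lt_min hr1 hr2, fun z hz => ?_⟩
      simp only [Set.mem_setOf_eq] at hz
      exact ⟨h1 (show z ∈ _ from lt_of_lt_of_le hz (min_le_left _ _)),
        h2 (show z ∈ _ from lt_of_lt_of_le hz (min_le_right _ _))⟩
    | sUnion S hS ih =>
      intro y hy
      obtain ⟨s, hsS, hys⟩ := hy
      obtain ⟨r, hr, hsub⟩ := ih s hsS y hys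
      exact ⟨r, hr, hsub.trans (Set.subset_sUnion_of_mem hsS)⟩
  · intro h
    have hU : U = ⋃₀ {s | (∃ x : X, ∃ r : ℝ, 0 < r ∧ s = {y : X | ρ x y < r}) ∧ s ⊆ U} := by
      apply Set.Subset.antisymm
      · intro y hy
        obtain ⟨r, hr, hsub⟩ := h y hy
        exact ⟨{z | ρ y z < r}, ⟨⟨y, r, hr, rfl⟩, hsub⟩, by simp [hρ0 y, hr]⟩
      · exact Set.sUnion_subset fun s hs => hs.2
    rw [hU]
    exact TopologicalSpace.GenerateOpen.sUnion _ fun s hs =>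
      TopologicalSpace.GenerateOpen.basic s hs.1

/-- Let `(X, d)` be a quasi-hemi-metric space with index of symmetry
`c(X) > 0` whose symmetrized metric `d_s(x,y) = max (d x y) (d y x)` is complete
(every `d_s`-Cauchy sequence converges). Then the topology induced by `d`
coincides with the topology of the metric `d_s`, and in particular `X` with the
topology induced by `d` is a Baire space. -/
theorem stmt_9 {X : Type*} (d : X → X → ℝ)
    (hd0 : ∀ x y, 0 ≤ d x y)
    (htri : ∀ x y z, d x y ≤ d x z + d z y)
    (hsep : ∀ x y, (d x y = 0 ∧ d y x = 0) ↔ x = y)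
    (hc : 0 < sInf {r : ℝ | ∃ x y : X, 0 < d y x ∧ r = d x y / d y x})
    (hcomp : ∀ u : ℕ → X,
      (∀ ε : ℝ, 0 < ε → ∃ N : ℕ, ∀ m ≥ N, ∀ n ≥ N,
        max (d (u m) (u n)) (d (u n) (u m)) < ε) →
      ∃ x : X, ∀ ε : ℝ, 0 < ε → ∃ N : ℕ, ∀ n ≥ N,
        max (d x (u n)) (d (u n) x) < ε) :
    (TopologicalSpace.generateFrom
        {s : Set X | ∃ x : X, ∃ r : ℝ, 0 < r ∧ s = {y : X | d x y < r}}
      = TopologicalSpace.generateFrom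
        {s : Set X | ∃ x : X, ∃ r : ℝ, 0 < r ∧
          s = {y : X | max (d x y) (d y x) < r}}) ∧
    @BaireSpace X (TopologicalSpace.generateFrom
        {s : Set X | ∃ x : X, ∃ r : ℝ, 0 < r ∧ s = {y : X | d x y < r}}) := by
  set c := sInf {r : ℝ | ∃ x y : X, 0 < d y x ∧ r = d x y / d y x} with hcdef
  set ds : X → X → ℝ := fun x y => max (d x y) (d y x) with hds
  have hxx : ∀ x : X, d x x = 0 := fun x => ((hsep x x).mpr rfl).1
  have hdsxx : ∀ x : X, ds x x = 0 := fun x => by simp [hds, hxx x]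
  have hdstri : ∀ x y z, ds x y ≤ ds x z + ds z y := by
    intro x y z
    simp only [hds, max_le_iff]
    constructor
    · exact le_trans (htri x y z) (add_le_add (le_max_left _ _) (le_max_left _ _))
    · calc d y x ≤ d y z + d z x := htri y x z
        _ ≤ (max (d z y) (d y z)) + (max (d x z) (d z x)) :=
            add_le_add (le_max_right _ _) (le_max_right _ _)
        _ = (max (d x z) (d z x)) + (max (d z y) (d y z)) := add_comm _ _
  have hkey : ∀ x y, c * d y x ≤ d x y := by
    intro x y
    rcases eq_or_lt_of_le (hd0 y x) with h | h
    · simp [← h, hd0 x y]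
    · have hmem : d x y / d y x ∈ {r : ℝ | ∃ x y : X, 0 < d y x ∧ r = d x y / d y x} :=
        ⟨x, y, h, rfl⟩
      have hbdd : BddBelow {r : ℝ | ∃ x y : X, 0 < d y x ∧ r = d x y / d y x} :=
        ⟨0, fun r ⟨a, b, hb, hr⟩ => hr ▸ div_nonneg (hd0 a b) (le_of_lt hb)⟩
      have := csInf_le hbdd hmem
      rw [le_div_iff₀ h] at this
      exact this
  -- characterizations
  have char1 := gen_char' d hxx htri
  have char2 := gen_char' ds hdsxx hdstri
  have hiff : ∀ U : Set X, (∀ y ∈ U, ∃ r > 0, {z : X | d y z < r} ⊆ U) ↔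
      (∀ y ∈ U, ∃ r > 0, {z : X | ds y z < r} ⊆ U) := by
    intro U
    constructor
    · intro h y hy
      obtain ⟨r, hr, hsub⟩ := h y hy
      refine ⟨r, hr, fun z hz => hsub ?_⟩
      simp only [Set.mem_setOf_eq] at hz ⊢
      exact lt_of_le_of_lt (le_max_left _ _) hz
    · intro h y hy
      obtain ⟨r, hr, hsub⟩ := h y hy
      refine ⟨min c 1 * r, mul_pos (lt_min hc one_pos) hr, fun z hz => hsub ?_⟩
      simp only [Set.mem_setOf_eq] at hz ⊢
      have h1 : d y z < r := lt_of_lt_of_le hz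
        (by nlinarith [min_le_right c 1])
      have h2 : d z y < r := by
        have := hkey y z
        have hminc : min c 1 * r ≤ c * r := by nlinarith [min_le_left c 1]
        have : c * d z y < c * r := lt_of_le_of_lt this (lt_of_lt_of_le hz hminc)
        exact lt_of_mul_lt_mul_left (by linarith) (le_of_lt hc)
      exact max_lt h1 h2
  have heq : TopologicalSpace.generateFrom
        {s : Set X | ∃ x : X, ∃ r : ℝ, 0 < r ∧ s = {y : X | d x y < r}}
      = TopologicalSpace.generateFrom
        {s : Set X | ∃ x : X, ∃ r : ℝ, 0 < r ∧ s = {y : X | max (d x y) (d y x) < r}} := by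
    apply TopologicalSpace.ext
    ext U
    exact (char1 U).trans ((hiff U).trans (char2 U).symm)
  refine ⟨heq, ?_⟩
  rw [heq]
  -- build metric space
  letI P : PseudoMetricSpace X :=
    { dist := ds
      dist_self := hdsxx
      dist_comm := fun x y => max_comm _ _
      dist_triangle := fun x y z => hdstri x z y }
  letI M : MetricSpace X :=
    { eq_of_dist_eq_zero := by
        intro x y h
        have h1 : d x y = 0 := le_antisymm (le_trans (le_max_left _ _) (le_of_eq h)) (hd0 x y)
        have h2 : d y x = 0 := le_antisymm (le_trans (le_max_right _ _) (le_of_eq h)) (hd0 y x)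
        exact (hsep x y).mp ⟨h1, h2⟩ }
  have heq2 : TopologicalSpace.generateFrom
        {s : Set X | ∃ x : X, ∃ r : ℝ, 0 < r ∧ s = {y : X | max (d x y) (d y x) < r}}
      = P.toUniformSpace.toTopologicalSpace := by
    have hball : ∀ (y : X) (r : ℝ), Metric.ball y r = {z : X | ds y z < r} := by
      intro y r
      ext z
      rw [Metric.mem_ball]
      show max (d z y) (d y z) < r ↔ max (d y z) (d z y) < r
      rw [max_comm]
    apply TopologicalSpace.ext
    ext U
    have hM : IsOpen U ↔ ∀ y ∈ U, ∃ r > 0, {z : X | ds y z < r} ⊆ U := by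
      rw [Metric.isOpen_iff]
      simp only [hball]
    exact (char2 U).trans hM.symm
  rw [heq2]
  haveI : CompleteSpace X := by
    apply Metric.complete_of_cauchySeq_tendsto
    intro u hu
    rw [Metric.cauchySeq_iff] at hu
    obtain ⟨x, hx⟩ := hcomp u hu
    refine ⟨x, ?_⟩
    rw [Metric.tendsto_atTop]
    intro ε hε
    obtain ⟨N, hN⟩ := hx ε hε
    refine ⟨N, fun n hn => ?_⟩
    have := hN n hn
    show max (d (u n) x) (d x (u n)) < ε
    rwa [max_comm]
  exact inferInstance
end

section
/- On the space ℓ^∞ of bounded real sequences indexed by the positive integers, define ‖x|_∞ := sup_{n ≥ 1} ‖x_n|_{1/n}, where ‖t|_{1/n} = t if t ≥ 0 and ‖t|_{1/n} = -t/n if t ≤ 0 (i.e. ‖t|_{1/n} = max(t, -t/n)). Then ‖·|_∞ is an asymmetric norm on ℓ^∞ with ‖x|_∞ ≤ ‖x‖_∞ for all x, and its index of symmetry is zero: for each n ≥ 1 the canonical unit vector e_n satisfies ‖e_n|_∞ = 1 and ‖-e_n|_∞ = 1/n, hence c(ℓ^∞, ‖·|_∞) = 0. -/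
namespace Stmt10Aux

noncomputable abbrev X := lp (fun _ : ℕ+ => ℝ) ⊤

noncomputable def f (x : X) (n : ℕ+) : ℝ := max (x n) (-(x n) / (n : ℝ))

lemma one_le (n : ℕ+) : (1 : ℝ) ≤ (n : ℝ) := by exact_mod_cast n.one_le

lemma npos (n : ℕ+) : (0 : ℝ) < (n : ℝ) := lt_of_lt_of_le one_pos (one_le n)

lemma f_nonneg (x : X) (n : ℕ+) : 0 ≤ f x n := by
  rcases le_or_gt 0 (x n) with h | h
  · exact le_max_of_le_left h
  · exact le_max_of_le_right (div_nonneg (by linarith) (npos n).le)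

lemma f_le_norm (x : X) (n : ℕ+) : f x n ≤ ‖x‖ := by
  have h : |x n| ≤ ‖x‖ := by
    have := lp.norm_apply_le_norm ENNReal.top_ne_zero x n
    rwa [Real.norm_eq_abs] at this
  have h1 : x n ≤ |x n| := le_abs_self _
  have h2 : -(x n) / (n : ℝ) ≤ |x n| := by
    have ha : -(x n) / (n : ℝ) ≤ |x n| / (n : ℝ) :=
      div_le_div_of_nonneg_right (neg_le_abs _) (npos n).le
    exact ha.trans (div_le_self (abs_nonneg _) (one_le n))
  exact max_le (h1.trans h) (h2.trans h)

lemma bdd (x : X) : BddAbove (Set.range (f x)) :=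
  ⟨‖x‖, by rintro r ⟨n, rfl⟩; exact f_le_norm x n⟩

lemma q_nonneg (x : X) : 0 ≤ ⨆ n, f x n :=
  le_trans (f_nonneg x 1) (le_ciSup (bdd x) 1)

lemma f_smul (c : ℝ) (hc : 0 ≤ c) (x : X) (n : ℕ+) : f (c • x) n = c * f x n := by
  have hx : (c • x) n = c * x n := rfl
  simp only [f, hx, mul_max_of_nonneg _ _ hc]
  ring_nf

lemma f_add (x y : X) (n : ℕ+) : f (x + y) n ≤ f x n + f y n := by
  have hx : (x + y) n = x n + y n := rfl
  simp only [f, hx]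
  apply max_le
  · exact add_le_add (le_max_left _ _) (le_max_left _ _)
  · rw [neg_add, add_div]
    exact add_le_add (le_max_right _ _) (le_max_right _ _)

lemma f_zero_of (x : X) (h : ⨆ n, f x n = 0) : x = 0 := by
  ext n
  have h1 : f x n ≤ 0 := h ▸ le_ciSup (bdd x) n
  have h2 : x n ≤ 0 := le_trans (le_max_left _ _) h1
  have h3 : -(x n) / (n : ℝ) ≤ 0 := le_trans (le_max_right _ _) h1
  have h4 : 0 ≤ x n := by
    rcases div_nonpos_iff.mp h3 with ⟨ha, hb⟩ | ⟨ha, hb⟩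
    · exact absurd (npos n) (not_lt.mpr hb)
    · linarith
  have : x n = 0 := le_antisymm h2 h4
  simpa using this

end Stmt10Aux

namespace Stmt10Aux

lemma q_smul (c : ℝ) (hc : 0 ≤ c) (x : X) : ⨆ n, f (c • x) n = c * ⨆ n, f x n := by
  rw [Real.mul_iSup_of_nonneg hc]
  exact iSup_congr (f_smul c hc x)

lemma q_add (x y : X) : ⨆ n, f (x + y) n ≤ (⨆ n, f x n) + ⨆ n, f y n := by
  apply ciSup_le
  intro n
  exact (f_add x y n).trans (add_le_add (le_ciSup (bdd x) n) (le_ciSup (bdd y) n))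

lemma sup_single (g : ℕ+ → ℝ) (n : ℕ+) (v : ℝ) (hv : 0 ≤ v) (hn : g n = v)
    (ho : ∀ k, k ≠ n → g k = 0) : ⨆ k, g k = v := by
  apply le_antisymm
  · apply ciSup_le
    intro k
    by_cases hk : k = n
    · rw [hk, hn]
    · rw [ho k hk]; exact hv
  · have : g n ≤ ⨆ k, g k := by
      apply le_ciSup (f := g) ?_ n
      refine ⟨v, ?_⟩
      rintro r ⟨k, rfl⟩
      by_cases hk : k = n
      · rw [hk, hn]
      · rw [ho k hk]; exact hv
    rwa [hn] at this

lemma q_single (n : ℕ+) : ⨆ k, f (lp.single (E := fun _ : ℕ+ => ℝ) ⊤ n (1 : ℝ)) k = 1 := by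
  apply sup_single _ n 1 zero_le_one
  · have h : (lp.single (E := fun _ : ℕ+ => ℝ) ⊤ n (1 : ℝ)) n = 1 := lp.single_apply_self (E := fun _ : ℕ+ => ℝ) ⊤ n 1
    simp only [f, h]
    rw [max_eq_left]
    have := npos n
    rw [neg_div]
    have : (0:ℝ) ≤ 1 / (n:ℝ) := by positivity
    linarith
  · intro k hk
    have h : (lp.single (E := fun _ : ℕ+ => ℝ) ⊤ n (1 : ℝ)) k = 0 := lp.single_apply_ne (E := fun _ : ℕ+ => ℝ) ⊤ n 1 hk
    simp only [f, h]; simp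

lemma q_neg_single (n : ℕ+) : ⨆ k, f (-(lp.single (E := fun _ : ℕ+ => ℝ) ⊤ n (1 : ℝ))) k = 1 / (n : ℝ) := by
  apply sup_single _ n (1 / (n : ℝ)) (by positivity)
  · have h : (-(lp.single (E := fun _ : ℕ+ => ℝ) ⊤ n (1 : ℝ))) n = -1 := by
      have h1 : (lp.single (E := fun _ : ℕ+ => ℝ) ⊤ n (1 : ℝ)) n = 1 := lp.single_apply_self (E := fun _ : ℕ+ => ℝ) ⊤ n 1
      have : (-(lp.single (E := fun _ : ℕ+ => ℝ) ⊤ n (1 : ℝ))) n = -((lp.single (E := fun _ : ℕ+ => ℝ) ⊤ n (1 : ℝ)) n) := rfl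
      rw [this, h1]
    simp only [f, h]
    rw [max_eq_right]
    · ring_nf
    · have : (0:ℝ) ≤ 1 / (n:ℝ) := by positivity
      rw [neg_neg]
      · linarith [div_nonneg zero_le_one (npos n).le]
  · intro k hk
    have h1 : (lp.single (E := fun _ : ℕ+ => ℝ) ⊤ n (1 : ℝ)) k = 0 := lp.single_apply_ne (E := fun _ : ℕ+ => ℝ) ⊤ n 1 hk
    have h : (-(lp.single (E := fun _ : ℕ+ => ℝ) ⊤ n (1 : ℝ))) k = 0 := by
      have : (-(lp.single (E := fun _ : ℕ+ => ℝ) ⊤ n (1 : ℝ))) k = -((lp.single (E := fun _ : ℕ+ => ℝ) ⊤ n (1 : ℝ)) k) := rfl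
      rw [this, h1, neg_zero]
    simp [f, h]

end Stmt10Aux

open Stmt10Aux

/-- On `ℓ^∞ = ℓ^∞(ℕ+)` (bounded real sequences indexed by the positive
integers), `‖x|_∞ := ⨆ n, max (x n) (-(x n)/n)` is an asymmetric norm with
`‖x|_∞ ≤ ‖x‖_∞`, the canonical unit vectors satisfy `‖e n|_∞ = 1` and
`‖-e n|_∞ = 1/n`, and the index of symmetry `c(ℓ^∞, ‖·|_∞)` is zero. -/
theorem stmt_10 :
    ∀ q : lp (fun _ : ℕ+ => ℝ) ⊤ → ℝ,
      (q = fun x => ⨆ n : ℕ+, max (x n) (-(x n) / (n : ℝ))) →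
      (∀ x, 0 ≤ q x) ∧
      (∀ c : ℝ, 0 ≤ c → ∀ x, q (c • x) = c * q x) ∧
      (∀ x y, q (x + y) ≤ q x + q y) ∧
      (∀ x, (q x = 0 ∧ q (-x) = 0) ↔ x = 0) ∧
      (∀ x, q x ≤ ‖x‖) ∧
      (∀ n : ℕ+, q (lp.single ⊤ n (1 : ℝ)) = 1 ∧
        q (-(lp.single ⊤ n (1 : ℝ))) = 1 / (n : ℝ)) ∧
      sInf {r : ℝ | ∃ x, q x = 1 ∧ r = q (-x)} = 0 := by
  intro q hq
  subst hq
  have hq0 : (⨆ n, f (0 : X) n) = 0 := by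
    have h : ∀ n : ℕ+, f (0 : X) n = 0 := by
      intro n
      have h0 : (0 : X) n = 0 := rfl
      simp [f, h0]
    rw [iSup_congr h, ciSup_const]
  refine ⟨fun x => q_nonneg x, fun c hc x => q_smul c hc x, fun x y => q_add x y,
    ?_, fun x => ciSup_le (f_le_norm x), fun n => ⟨q_single n, q_neg_single n⟩, ?_⟩
  · intro x
    constructor
    · rintro ⟨h1, _⟩
      exact f_zero_of x h1
    · rintro rfl
      exact ⟨hq0, by rw [neg_zero]; exact hq0⟩
  · set S := {r : ℝ | ∃ x : X, (⨆ n, f x n) = 1 ∧ r = ⨆ n, f (-x) n} with hS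
    have hbdd : BddBelow S := ⟨0, by rintro r ⟨x, _, rfl⟩; exact q_nonneg _⟩
    have hmem : ∀ n : ℕ+, (1 / (n : ℝ)) ∈ S := fun n =>
      ⟨lp.single ⊤ n (1 : ℝ), q_single n, (q_neg_single n).symm⟩
    apply le_antisymm
    · apply le_of_forall_pos_le_add
      intro ε hε
      obtain ⟨m, hm⟩ := exists_nat_one_div_lt hε
      have hn : (1 : ℝ) / ((⟨m + 1, Nat.succ_pos m⟩ : ℕ+) : ℝ) < ε := by
        exact_mod_cast hm
      calc sInf S ≤ 1 / ((⟨m + 1, Nat.succ_pos m⟩ : ℕ+) : ℝ) :=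
            csInf_le hbdd (hmem _)
        _ ≤ 0 + ε := by linarith
    · exact le_csInf ⟨_, hmem 1⟩ (by rintro r ⟨x, _, rfl⟩; exact q_nonneg _)
end

section
/- The space ℓ^∞ of bounded real sequences indexed by the positive integers, equipped with the topology induced by the asymmetric norm ‖x|_∞ := sup_{n ≥ 1} max(x_n, -x_n/n), is not a Baire space. -/
open TopologicalSpace Set

namespace Stmt11Aux

noncomputable section

abbrev X := lp (fun _ : ℕ+ => ℝ) ⊤

def N (z : X) : ℝ := ⨆ n : ℕ+, max (z n) (-(z n) / (n : ℝ))

lemma coord_le_abs (a : ℝ) (n : ℕ+) : max a (-a / (n : ℝ)) ≤ |a| := by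
  have hn : (1 : ℝ) ≤ (n : ℝ) := by exact_mod_cast n.one_le
  have hn0 : (0:ℝ) < (n : ℝ) := by exact_mod_cast n.pos
  refine max_le (le_abs_self a) ?_
  calc -a / (n : ℝ) ≤ |a| / (n : ℝ) := by gcongr; exact neg_le_abs a
    _ ≤ |a| := div_le_self (abs_nonneg a) hn

lemma coord_nonneg (a : ℝ) (n : ℕ+) : 0 ≤ max a (-a / (n : ℝ)) := by
  rcases le_or_gt 0 a with h | h
  · exact le_max_of_le_left h
  · refine le_max_of_le_right ?_
    have hn0 : (0:ℝ) < (n : ℝ) := by exact_mod_cast n.pos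
    exact div_nonneg (by linarith) hn0.le

lemma bdd (z : X) : BddAbove (Set.range fun n : ℕ+ => max (z n) (-(z n) / (n : ℝ))) := by
  obtain ⟨C, hC⟩ := memℓp_infty_iff.mp (lp.memℓp z)
  refine ⟨C, ?_⟩
  rintro _ ⟨n, rfl⟩
  calc max (z n) (-(z n) / (n : ℝ)) ≤ |z n| := coord_le_abs _ n
    _ ≤ C := hC ⟨n, rfl⟩

lemma coord_le_N (z : X) (n : ℕ+) : max (z n) (-(z n) / (n : ℝ)) ≤ N z :=
  le_ciSup (bdd z) n

lemma N_nonneg (z : X) : 0 ≤ N z :=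
  le_trans (coord_nonneg (z 1) 1) (coord_le_N z 1)

lemma N_sub_self (x : X) : N (x - x) = 0 := by
  have : ∀ n : ℕ+, ((x - x : X) : ∀ _ : ℕ+, ℝ) n = 0 := by
    intro n; simp [lp.coeFn_sub]
  simp only [N, this]
  simp

lemma N_add_le (a b : X) : N (a + b) ≤ N a + N b := by
  refine ciSup_le fun n => ?_
  have hab : ((a + b : X) : ∀ _ : ℕ+, ℝ) n = a n + b n := by simp [lp.coeFn_add]
  rw [hab]
  have h1 : a n + b n ≤ max (a n) (-(a n) / (n:ℝ)) + max (b n) (-(b n) / (n:ℝ)) :=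
    add_le_add (le_max_left _ _) (le_max_left _ _)
  have h2 : -(a n + b n) / (n:ℝ) ≤ max (a n) (-(a n) / (n:ℝ)) + max (b n) (-(b n) / (n:ℝ)) := by
    have : -(a n + b n) / (n:ℝ) = -(a n) / (n:ℝ) + -(b n) / (n:ℝ) := by ring
    rw [this]
    exact add_le_add (le_max_right _ _) (le_max_right _ _)
  exact le_trans (max_le h1 h2) (add_le_add (coord_le_N a n) (coord_le_N b n))

lemma N_tri (y x₁ x : X) : N (y - x₁) ≤ N (y - x) + N (x - x₁) := by
  have : y - x₁ = (y - x) + (x - x₁) := by abel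
  rw [this]; exact N_add_le _ _

def S : Set (Set X) :=
  {s : Set X | ∃ x : X, ∃ r : ℝ, 0 < r ∧ s = {y : X |
      (⨆ n : ℕ+, max ((y - x) n) (-((y - x) n) / (n : ℝ))) < r}}

lemma ball_eq (x : X) (r : ℝ) :
    {y : X | (⨆ n : ℕ+, max ((y - x) n) (-((y - x) n) / (n : ℝ))) < r}
      = {y : X | N (y - x) < r} := rfl

lemma isBasis : @IsTopologicalBasis X (generateFrom S) S := by
  refine @IsTopologicalBasis.mk X (generateFrom S) S ?_ ?_ rfl
  · rintro t₁ ⟨x₁, r₁, hr₁, rfl⟩ t₂ ⟨x₂, r₂, hr₂, rfl⟩ p ⟨hp₁, hp₂⟩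
    rw [ball_eq] at hp₁ hp₂
    set δ := min (r₁ - N (p - x₁)) (r₂ - N (p - x₂)) with hδdef
    have hδ : 0 < δ := lt_min (by simp at hp₁ ⊢; linarith) (by simp at hp₂ ⊢; linarith)
    refine ⟨{y : X | (⨆ n : ℕ+, max ((y - p) n) (-((y - p) n) / (n : ℝ))) < δ},
      ⟨p, δ, hδ, rfl⟩, ?_, ?_⟩
    · show N (p - p) < δ
      rw [N_sub_self]; exact hδ
    · intro y hy
      replace hy : N (y - p) < δ := hy
      constructor
      · show N (y - x₁) < r₁
        have := N_tri y x₁ p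
        have h2 : δ ≤ r₁ - N (p - x₁) := min_le_left _ _
        linarith
      · show N (y - x₂) < r₂
        have := N_tri y x₂ p
        have h2 : δ ≤ r₂ - N (p - x₂) := min_le_right _ _
        linarith
  · apply eq_univ_of_forall
    intro x
    refine ⟨{y : X | (⨆ n : ℕ+, max ((y - x) n) (-((y - x) n) / (n : ℝ))) < 1},
      ⟨x, 1, one_pos, rfl⟩, ?_⟩
    show N (x - x) < 1
    rw [N_sub_self]; norm_num

def U (k : ℕ) : Set X := {x : X | ∃ n : ℕ+, x n < -(k : ℝ)}

lemma sub_apply (y x : X) (n : ℕ+) : ((y - x : X) : ∀ _ : ℕ+, ℝ) n = y n - x n := by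
  simp [lp.coeFn_sub]

lemma U_open (k : ℕ) : @IsOpen X (generateFrom S) (U k) := by
  rw [@IsTopologicalBasis.isOpen_iff X (generateFrom S) (U k) S isBasis]
  rintro x ⟨n, hn⟩
  refine ⟨{y : X | (⨆ m : ℕ+, max ((y - x) m) (-((y - x) m) / (m : ℝ))) < -(k:ℝ) - x n},
    ⟨x, -(k:ℝ) - x n, by linarith, rfl⟩, ?_, ?_⟩
  · show N (x - x) < -(k:ℝ) - x n
    rw [N_sub_self]; linarith
  · intro y hy
    replace hy : N (y - x) < -(k:ℝ) - x n := hy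
    have h1 : (y - x : X) n ≤ N (y - x) := le_trans (le_max_left _ _) (coord_le_N _ n)
    rw [sub_apply] at h1
    exact ⟨n, by linarith⟩

lemma U_dense (k : ℕ) : @Dense X (generateFrom S) (U k) := by
  rw [@IsTopologicalBasis.dense_iff X (generateFrom S) S isBasis (U k)]
  rintro o ⟨x, r, hr, rfl⟩ -
  -- construct a point in the ball around x that has a very negative coordinate
  obtain ⟨C, hC⟩ := memℓp_infty_iff.mp (lp.memℓp x)
  have hC0 : 0 ≤ C := le_trans (norm_nonneg _) (hC ⟨1, rfl⟩)
  set c : ℝ := C + (k : ℝ) + 1 with hc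
  have hcpos : 0 < c := by positivity
  obtain ⟨m, hm⟩ := exists_nat_gt (c / r)
  set n : ℕ+ := ⟨m + 1, Nat.succ_pos m⟩ with hn
  have hnR : (c / r) < (n : ℝ) := by
    have : (m : ℝ) < ((m : ℕ) + 1 : ℕ) := by exact_mod_cast Nat.lt_succ_self m
    calc c / r < (m : ℝ) := hm
      _ < (n : ℝ) := by exact_mod_cast Nat.lt_succ_self m
  have hnpos : (0 : ℝ) < (n : ℝ) := by exact_mod_cast n.pos
  have hcn : c / (n : ℝ) < r := by
    rw [div_lt_iff₀ hnpos]
    calc c = (c / r) * r := by field_simp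
      _ < (n : ℝ) * r := by exact mul_lt_mul_of_pos_right hnR hr
      _ = r * (n : ℝ) := mul_comm _ _
  set y : X := x - lp.single ⊤ n c with hy
  have hyx : ∀ p : ℕ+, ((y - x : X) : ∀ _ : ℕ+, ℝ) p = -((lp.single ⊤ n c : X) p) := by
    intro p
    rw [sub_apply]
    have : (y : ∀ _ : ℕ+, ℝ) p = x p - (lp.single ⊤ n c : X) p := by
      rw [hy, sub_apply]
    rw [this]; ring
  refine ⟨y, ?_, ?_⟩
  · show N (y - x) < r
    refine lt_of_le_of_lt (ciSup_le fun p => ?_) hcn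
    rw [hyx p]
    by_cases hp : p = n
    · subst hp
      rw [lp.single_apply_self]
      refine max_le ?_ ?_
      · calc -c ≤ 0 := by linarith
          _ ≤ c / (n:ℝ) := div_nonneg hcpos.le hnpos.le
      · rw [neg_neg]
    · rw [lp.single_apply_ne _ _ _ hp]
      simp only [neg_zero, zero_div]
      simp only [max_self]
      positivity
  · refine ⟨n, ?_⟩
    have : (y : ∀ _ : ℕ+, ℝ) n = x n - c := by
      rw [hy, sub_apply, lp.single_apply_self]
    rw [this]
    have hxn : x n ≤ C := le_trans (le_abs_self _) (hC ⟨n, rfl⟩)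
    rw [hc]; push_cast; linarith

lemma iInter_U_empty : (⋂ k : ℕ, U k) = ∅ := by
  rw [eq_empty_iff_forall_notMem]
  intro x hx
  obtain ⟨C, hC⟩ := memℓp_infty_iff.mp (lp.memℓp x)
  have hC0 : 0 ≤ C := le_trans (norm_nonneg _) (hC ⟨1, rfl⟩)
  obtain ⟨n, hn⟩ := (Set.mem_iInter.mp hx) (⌈C⌉₊)
  have h1 : -(x n) ≤ C := le_trans (neg_le_abs _) (hC ⟨n, rfl⟩)
  have h2 : C ≤ (⌈C⌉₊ : ℝ) := Nat.le_ceil C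
  linarith

end

end Stmt11Aux

/-- The space `ℓ^∞` of bounded real sequences indexed by the positive
integers, equipped with the topology induced by the asymmetric norm
`‖x|_∞ := ⨆ n, max (x n) (-(x n)/n)`, is not a Baire space. -/
theorem stmt_11 :
    ¬ @BaireSpace (lp (fun _ : ℕ+ => ℝ) ⊤)
      (TopologicalSpace.generateFrom
        {s : Set (lp (fun _ : ℕ+ => ℝ) ⊤) | ∃ x : lp (fun _ : ℕ+ => ℝ) ⊤, ∃ r : ℝ,
          0 < r ∧ s = {y : lp (fun _ : ℕ+ => ℝ) ⊤ |
            (⨆ n : ℕ+, max ((y - x) n) (-((y - x) n) / (n : ℝ))) < r}}) := by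
  intro h
  letI : TopologicalSpace (lp (fun _ : ℕ+ => ℝ) ⊤) :=
    TopologicalSpace.generateFrom Stmt11Aux.S
  haveI : BaireSpace (lp (fun _ : ℕ+ => ℝ) ⊤) := h
  have hd : Dense (⋂ k : ℕ, Stmt11Aux.U k) :=
    dense_iInter_of_isOpen Stmt11Aux.U_open Stmt11Aux.U_dense
  rw [Stmt11Aux.iInter_U_empty] at hd
  have : Nonempty (lp (fun _ : ℕ+ => ℝ) ⊤) := ⟨0⟩
  exact (hd.nonempty).ne_empty rfl
end

section
/- Let (X, d) be a quasi-hemi-metric space and let f : X → ℝ be a function that is semi-Lipschitz with respect to the conjugate quasi-hemi-metric, i.e. there exists L ≥ 0 such that f(x) - f(y) ≤ L·d(y,x) for all x, y ∈ X, but whose negative is not semi-Lipschitz, i.e. for every C ≥ 0 there exist x, y ∈ X with f(x) - f(y) > C·d(x,y). Then the index of symmetry of (X,d) is zero: for every ε > 0 there exist x, y ∈ X with d(y,x) > 0 and d(x,y) < ε·d(y,x). -/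
/-- Let `(X, d)` be a quasi-hemi-metric space and `f : X → ℝ` be
semi-Lipschitz with respect to the conjugate quasi-hemi-metric
(`f x - f y ≤ L * d y x` for some `L ≥ 0`), while `-f` is not semi-Lipschitz
(for every `C ≥ 0` there are `x, y` with `f x - f y > C * d x y`). Then the
index of symmetry of `(X, d)` is zero: for every `ε > 0` there exist `x, y`
with `d y x > 0` and `d x y < ε * d y x`. -/
theorem stmt_12 {X : Type*} (d : X → X → ℝ)
    (hd0 : ∀ x y, 0 ≤ d x y)
    (htri : ∀ x y z, d x y ≤ d x z + d z y)
    (hsep : ∀ x y, (d x y = 0 ∧ d y x = 0) ↔ x = y)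
    (f : X → ℝ)
    (hsl : ∃ L : ℝ, 0 ≤ L ∧ ∀ x y : X, f x - f y ≤ L * d y x)
    (hnsl : ∀ C : ℝ, 0 ≤ C → ∃ x y : X, C * d x y < f x - f y) :
    ∀ ε : ℝ, 0 < ε → ∃ x y : X, 0 < d y x ∧ d x y < ε * d y x := by
  intro ε hε
  obtain ⟨L, hL0, hL⟩ := hsl
  obtain ⟨x, y, hxy⟩ := hnsl (L / ε) (div_nonneg hL0 hε.le)
  have h1 : (0:ℝ) ≤ L / ε * d x y := mul_nonneg (div_nonneg hL0 hε.le) (hd0 x y)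
  have hpos : 0 < f x - f y := lt_of_le_of_lt h1 hxy
  have h2 : f x - f y ≤ L * d y x := hL x y
  have hLdyx : 0 < L * d y x := lt_of_lt_of_le hpos h2
  have hLpos : 0 < L := by
    by_contra h
    push_neg at h
    nlinarith [hd0 y x]
  have hdyx : 0 < d y x := by
    by_contra h
    push_neg at h
    nlinarith
  refine ⟨x, y, hdyx, ?_⟩
  have h3 : L / ε * d x y < L * d y x := lt_of_lt_of_le hxy h2
  rw [div_mul_eq_mul_div] at h3
  have h4 : L * d x y < L * d y x * ε := (div_lt_iff₀ hε).mp h3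
  nlinarith
end
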